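/- Sharpness of the moment inequalities: given a joint distribution of ranked outcomes and group statuses (Y, G) with Y = (Y_1,...,Y_J) the outcomes by rank, if E[Y_a − Y_b | G = g] ≥ 0 for all a < b and all g with P(G = g) > 0, then there exists a random variable I (an information set) and a joint distribution of (Y, G, I) with the given marginal for (Y, G), such that the identity ranking maximizes E[Σ_r w_r Y_r | I] almost surely, for any strictly decreasing positive weights (w_r). In particular one can take I = G, since E[Y_r | G] is weakly decreasing in r. -/

import Mathlib

open MeasureTheory ProbabilityTheory

set_option maxHeartbeats 1000000 in
lemma condexp_comap_finite {Ω : Type*} {mΩ : MeasurableSpace Ω} (μ : Measure Ω)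
    [IsProbabilityMeasure μ] {β : Type*} [Fintype β] [MeasurableSpace β]
    [MeasurableSingletonClass β] (G : Ω → β) (hG : Measurable G)
    (f : Ω → ℝ) (hf : Integrable f μ) :
    (fun ω => (μ (G ⁻¹' {G ω})).toReal⁻¹ * ∫ x in G ⁻¹' {G ω}, f x ∂μ)
      =ᵐ[μ] μ[f | MeasurableSpace.comap G inferInstance] := by
  classical
  have hm : MeasurableSpace.comap G inferInstance ≤ mΩ := hG.comap_le
  set cF : β → ℝ := fun g => (μ (G ⁻¹' {g})).toReal⁻¹ * ∫ x in G ⁻¹' {g}, f x ∂μ with hcF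
  have hAtom : ∀ g : β, MeasurableSet[mΩ] (G ⁻¹' {g}) := fun g => hG (measurableSet_singleton g)
  have hkey : ∀ g : β, ∫ x in G ⁻¹' {g}, f x ∂μ = (μ (G ⁻¹' {g})).toReal * cF g := by
    intro g
    rcases eq_or_ne (μ (G ⁻¹' {g})) 0 with h0 | h0
    · rw [h0, ENNReal.toReal_zero, zero_mul,
        show μ.restrict (G ⁻¹' {g}) = 0 from Measure.restrict_eq_zero.mpr h0,
        integral_zero_measure]
    · have ht : (μ (G ⁻¹' {g})).toReal ≠ 0 :=
        ENNReal.toReal_ne_zero.mpr ⟨h0, measure_ne_top μ _⟩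
      rw [hcF]
      simp only
      rw [← mul_assoc, mul_inv_cancel₀ ht, one_mul]
  have hint : Integrable (fun ω => cF (G ω)) μ := by
    obtain ⟨C, hC⟩ := (Finset.univ.image fun g : β => |cF g|).exists_le
    refine (integrable_const C).mono'
      ((measurable_of_countable cF).comp hG).aestronglyMeasurable
      (Filter.Eventually.of_forall fun ω => ?_)
    simpa using hC _ (Finset.mem_image_of_mem _ (Finset.mem_univ (G ω)))
  have hdecomp : ∀ (h : Ω → ℝ), Integrable h μ → ∀ t : Set β,
      ∫ x in G ⁻¹' t, h x ∂μ
        = ∑ g ∈ Finset.univ.filter (· ∈ t), ∫ x in G ⁻¹' {g}, h x ∂μ := by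
    intro h hh t
    have hset : G ⁻¹' t = ⋃ g ∈ Finset.univ.filter (· ∈ t), G ⁻¹' {g} := by
      ext x; simp
    rw [hset, integral_biUnion_finset _ (fun g _ => hAtom g) ?_ fun g _ => hh.integrableOn]
    intro g _ g' _ hne
    exact Set.disjoint_left.mpr fun x hx hx' => hne (hx.symm.trans hx')
  refine (ae_eq_condExp_of_forall_setIntegral_eq hm hf
    (fun s _ _ => hint.integrableOn) (fun s hs _ => ?_) ?_)
  · obtain ⟨t, -, rfl⟩ := hs
    rw [hdecomp _ hint t, hdecomp _ hf t]
    refine Finset.sum_congr rfl fun g _ => ?_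
    rw [hkey g]
    calc ∫ x in G ⁻¹' {g}, cF (G x) ∂μ = ∫ _x in G ⁻¹' {g}, cF g ∂μ :=
          setIntegral_congr_fun (hAtom g) fun x hx => by rw [hx]
      _ = (μ (G ⁻¹' {g})).toReal * cF g := by rw [setIntegral_const]; rfl
  · exact StronglyMeasurable.aestronglyMeasurable
      (Measurable.stronglyMeasurable
        ((measurable_of_countable cF).comp (Measurable.of_comap_le le_rfl)))

set_option maxHeartbeats 1000000 in
/-- Sharpness of the moment inequalities. If the outcomes-by-rank Y and
group configuration G (finitely many values) satisfy E[Y_a - Y_b | G = g] ≥ 0 for all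
a < b and all g with P(G = g) > 0, then there exists an information σ-algebra m (one can
take the σ-algebra generated by G) under which E[Y_r | m] is a.s. weakly decreasing in r
and the identity ranking maximizes E[Σ_r w_r Y_{σ(r)} | m] a.s. over all m-measurable
ranking rules, for every strictly decreasing positive weight sequence. -/
theorem stmt8 {Ω : Type*} {mΩ : MeasurableSpace Ω}
    (μ : Measure Ω) [IsProbabilityMeasure μ]
    {J : ℕ} {γty : Type*} [Fintype γty] [MeasurableSpace γty] [MeasurableSingletonClass γty]
    (Y : Fin J → Ω → ℝ) (hY : ∀ r, Integrable (Y r) μ)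
    (G : Ω → Fin J → γty) (hGmeas : Measurable G)
    (hineq : ∀ a b : Fin J, a < b → ∀ g : Fin J → γty, 0 < μ {ω | G ω = g} →
      0 ≤ ∫ ω, (Y a ω - Y b ω) ∂(μ[|{ω | G ω = g}])) :
    ∃ m : MeasurableSpace Ω, m ≤ mΩ ∧ Measurable[m] G ∧
      (∀ a b : Fin J, a ≤ b → ∀ᵐ ω ∂μ, (μ[Y b | m]) ω ≤ (μ[Y a | m]) ω) ∧
      ∀ w : Fin J → ℝ, StrictAnti w → (∀ r, 0 < w r) →
        ∀ σ : Ω → Equiv.Perm (Fin J), (∀ r, Measurable[m] fun ω => σ ω r) →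
          ∀ᵐ ω ∂μ, (μ[fun ω' => ∑ r, w r * Y (σ ω' r) ω' | m]) ω ≤
            (μ[fun ω' => ∑ r, w r * Y r ω' | m]) ω := by 
  classical
  set c : (Fin J → γty) → Fin J → ℝ :=
    fun g r => (μ (G ⁻¹' {g})).toReal⁻¹ * ∫ x in G ⁻¹' {g}, Y r x ∂μ with hc_def
  have hcond : ∀ r, (fun ω => c (G ω) r)
      =ᵐ[μ] μ[Y r | MeasurableSpace.comap G inferInstance] := fun r =>
    condexp_comap_finite μ G hGmeas (Y r) (hY r)
  have hpos : ∀ᵐ ω ∂μ, 0 < μ (G ⁻¹' {G ω}) := by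
    rw [ae_iff]
    refine measure_mono_null (fun ω hω => ?_)
      ((measure_biUnion_null_iff
        ((Finset.univ.filter fun g : Fin J → γty => μ (G ⁻¹' {g}) = 0) : Finset _).countable_toSet).2
        fun g hg => by simpa using (Finset.mem_filter.mp hg).2)
    simp only [Set.mem_setOf_eq, not_lt, le_zero_iff] at hω
    exact Set.mem_biUnion (Finset.mem_filter.mpr ⟨Finset.mem_univ _, hω⟩) rfl
  have hanti : ∀ g : Fin J → γty, 0 < μ (G ⁻¹' {g}) → ∀ a b : Fin J, a ≤ b → c g b ≤ c g a := by
    intro g hg a b hab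
    rcases eq_or_lt_of_le hab with rfl | h
    · exact le_refl _
    have hgset : ({ω | G ω = g} : Set Ω) = G ⁻¹' {g} := rfl
    have h0 := hineq a b h g (by rw [hgset]; exact hg)
    have htpos : 0 < (μ (G ⁻¹' {g})).toReal :=
      ENNReal.toReal_pos hg.ne' (measure_ne_top μ _)
    have hcalc : ∫ ω, (Y a ω - Y b ω) ∂(μ[|{ω | G ω = g}]) = c g a - c g b := by
      rw [ProbabilityTheory.cond, hgset, integral_smul_measure,
        integral_sub ((hY a).integrableOn) ((hY b).integrableOn),
        ENNReal.toReal_inv, smul_eq_mul, hc_def]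
      ring
    rw [hcalc] at h0
    linarith
  refine ⟨MeasurableSpace.comap G inferInstance, hGmeas.comap_le,
    Measurable.of_comap_le le_rfl, ?_, ?_⟩
  · intro a b hab
    filter_upwards [hcond a, hcond b, hpos] with ω ha hb hp
    rw [← ha, ← hb]
    exact hanti _ hp a b hab
  · intro w hw hwpos σ hσ
    have hconst : ∀ ω ω' : Ω, G ω = G ω' → ∀ r, σ ω r = σ ω' r := by
      intro ω ω' hGG r
      obtain ⟨t, -, ht⟩ := MeasurableSpace.measurableSet_comap.mp
        (hσ r (measurableSet_singleton (σ ω' r)))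
      have hω' : ω' ∈ (fun x => σ x r) ⁻¹' {σ ω' r} := rfl
      rw [← ht] at hω'
      have hω : ω ∈ G ⁻¹' t := by
        simp only [Set.mem_preimage] at hω' ⊢
        rw [hGG]; exact hω'
      rw [ht] at hω
      exact hω
    set π : (Fin J → γty) → Equiv.Perm (Fin J) :=
      fun g => if h : ∃ ω, G ω = g then σ h.choose else 1 with hπ_def
    have hπG : ∀ ω r, σ ω r = π (G ω) r := by
      intro ω r
      have hex : ∃ ω', G ω' = G ω := ⟨ω, rfl⟩
      rw [hπ_def]
      simp only [dif_pos hex]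
      exact hconst ω hex.choose hex.choose_spec.symm r
    have hAmeas : ∀ s : Set (Fin J → γty), MeasurableSet[mΩ] (G ⁻¹' s) :=
      fun s => hGmeas s.toFinite.measurableSet
    have hσint : Integrable (fun ω' => ∑ r, w r * Y (σ ω' r) ω') μ := by
      have heq : (fun ω' => ∑ r, w r * Y (σ ω' r) ω')
          = fun ω' => ∑ r, ∑ k, Set.indicator (G ⁻¹' {g | π g r = k})
              (fun x => w r * Y k x) ω' := by
        funext ω'
        refine Finset.sum_congr rfl fun r _ => ?_
        rw [Finset.sum_eq_single (π (G ω') r)]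
        · rw [Set.indicator_of_mem (by exact rfl), hπG ω' r]
        · exact fun k _ hk => Set.indicator_of_notMem
            (s := G ⁻¹' {g | (π g) r = k}) (fun h => hk (Eq.symm h)) _
        · exact fun h => absurd (Finset.mem_univ _) h
      rw [heq]
      exact integrable_finset_sum _ fun r _ => integrable_finset_sum _ fun k _ =>
        (((hY k).const_mul (w r)).indicator (hAmeas _))
    have hidint : Integrable (fun ω' => ∑ r, w r * Y r ω') μ :=
      integrable_finset_sum _ fun r _ => (hY r).const_mul (w r)
    have hcσ := condexp_comap_finite μ G hGmeas _ hσint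
    have hcid := condexp_comap_finite μ G hGmeas _ hidint
    filter_upwards [hcσ, hcid, hpos] with ω h1 h2 hp
    rw [← h1, ← h2]
    have hfix : ∫ x in G ⁻¹' {G ω}, (∑ r, w r * Y (σ x r) x) ∂μ
        = ∑ r, w r * ∫ x in G ⁻¹' {G ω}, Y (π (G ω) r) x ∂μ := by
      rw [setIntegral_congr_fun (hGmeas (measurableSet_singleton _))
        (g := fun x => ∑ r, w r * Y (π (G ω) r) x) (fun x hx => ?_),
        integral_finset_sum _ fun r _ => ((hY _).const_mul (w r)).integrableOn]
      · exact Finset.sum_congr rfl fun r _ => integral_const_mul _ _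
      · simp only [Set.mem_preimage, Set.mem_singleton_iff] at hx
        exact Finset.sum_congr rfl fun r _ => by rw [hπG x r, hx]
    have hfixid : ∫ x in G ⁻¹' {G ω}, (∑ r, w r * Y r x) ∂μ
        = ∑ r, w r * ∫ x in G ⁻¹' {G ω}, Y r x ∂μ := by
      rw [integral_finset_sum _ fun r _ => ((hY _).const_mul (w r)).integrableOn]
      exact Finset.sum_congr rfl fun r _ => integral_const_mul _ _
    have hmono : Monovary w (c (G ω)) := by
      intro i j hij
      by_contra hle
      push_neg at hle
      exact absurd (hanti _ hp _ _ (hw.lt_iff_gt.mp hle).le) (not_le.mpr hij)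
    have hrearr : ∑ r, w r * c (G ω) (π (G ω) r) ≤ ∑ r, w r * c (G ω) r := by
      simpa [smul_eq_mul] using
        hmono.sum_smul_comp_perm_le_sum_smul (σ := π (G ω))
    calc (μ (G ⁻¹' {G ω})).toReal⁻¹ * ∫ x in G ⁻¹' {G ω}, (∑ r, w r * Y (σ x r) x) ∂μ
        = ∑ r, w r * c (G ω) (π (G ω) r) := by
          rw [hfix, Finset.mul_sum, hc_def]
          exact Finset.sum_congr rfl fun r _ => by ring
      _ ≤ ∑ r, w r * c (G ω) r := hrearr
      _ = (μ (G ⁻¹' {G ω})).toReal⁻¹ * ∫ x in G ⁻¹' {G ω}, (∑ r, w r * Y r x) ∂μ := by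
          rw [hfixid, Finset.mul_sum, hc_def]
          exact Finset.sum_congr rfl fun r _ => by ring
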